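/- With K = k((t))^{1/p^∞} as above and ϑ a root of X^p - X - 1/t, for the partial sums b_k := t^{-1/p} + t^{-1/p²} + ... + t^{-1/p^k} ∈ K one has v(ϑ - b_k) = -1/p^{k+1}, and there is no c ∈ K with v(ϑ - c) > -1/p^k for all k. -/

import Mathlib

open scoped Multiplicative

/-- With `K = k((t))^{1/p^∞}` (a perfect purely inseparable extension of
`k((t))` with the unique extension of the `t`-adic valuation) and `ϑ` a root of
`X^p - X - 1/t`, for the partial sums `b_k = t^{-1/p} + ⋯ + t^{-1/p^k} ∈ K` one has
`v(ϑ - b_k) = -1/p^{k+1}` (multiplicatively: `v(ϑ - b_k)^{p^{k+1}} = v(t)⁻¹`), and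
there is no `c ∈ K` with `v(ϑ - c) > -1/p^k` for all `k` (multiplicatively: with
`v(ϑ - c) < v(ϑ - b_k)` for all `k`, since `-1/p^{k+1} = v(ϑ - b_k)`).
The root `t^{1/p^j} ∈ K` is obtained via the inverse of the Frobenius equivalence of
the perfect field `K`. -/
theorem partial_sums_approximate_artin_schreier_root
    {k : Type*} [Field k] {p : ℕ} (hp : p.Prime) [CharP k p] [ExpChar k p] [PerfectRing k p]
    {K L : Type*} [Field K] [Field L]
    [Algebra (LaurentSeries k) K] [Algebra K L] [Algebra (LaurentSeries k) L]
    [IsScalarTower (LaurentSeries k) K L]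
    [CharP K p] [ExpChar K p] [PerfectRing K p] [IsPurelyInseparable (LaurentSeries k) K]
    {Γ : Type*} [LinearOrderedCommGroupWithZero Γ] (v : Valuation L Γ)
    (hres : (v.comap (algebraMap (LaurentSeries k) L)).IsEquiv
        (Valued.v : Valuation (LaurentSeries k) (WithZero (Multiplicative ℤ))))
    (ϑ : L)
    (hϑ : ϑ ^ p - ϑ = (algebraMap (LaurentSeries k) L (HahnSeries.single (1 : ℤ) (1 : k)))⁻¹)
    (hgen : Algebra.adjoin K {ϑ} = ⊤) :
    -- `troot j = t^{1/p^j}`, `b i = Σ_{j=1}^i t^{-1/p^j}`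
    let troot : ℕ → K := fun j =>
      (fun x => (frobeniusEquiv K p).symm x)^[j]
        (algebraMap (LaurentSeries k) K (HahnSeries.single (1 : ℤ) (1 : k)))
    let b : ℕ → K := fun i => ∑ j ∈ Finset.range i, (troot (j + 1))⁻¹
    -- `v(ϑ - b_k) = -1/p^{k+1}`:
    (∀ i : ℕ, (v (ϑ - algebraMap K L (b i))) ^ (p ^ (i + 1)) =
        (v (algebraMap (LaurentSeries k) L (HahnSeries.single (1 : ℤ) (1 : k))))⁻¹) ∧
    -- no `c ∈ K` satisfies `v(ϑ - c) > -1/p^k` for all `k`: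
    ¬ ∃ c : K, ∀ i : ℕ, v (ϑ - algebraMap K L c) < v (ϑ - algebraMap K L (b i)) := by
  intro troot b
  haveI := Fact.mk hp
  classical
  set t : LaurentSeries k := HahnSeries.single (1 : ℤ) (1 : k) with ht
  have htne : t ≠ 0 := HahnSeries.single_ne_zero one_ne_zero
  set T : L := algebraMap (LaurentSeries k) L t with hT
  have hTne : T ≠ 0 := (map_ne_zero _).mpr htne
  haveI : CharP L p := charP_of_injective_algebraMap (algebraMap K L).injective p
  haveI : ExpChar L p := ExpChar.prime hp
  haveI : CharP (LaurentSeries k) p :=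
    charP_of_injective_algebraMap (algebraMap k (LaurentSeries k)).injective p
  haveI : ExpChar (LaurentSeries k) p := ExpChar.prime hp
  -- transfer facts about the valuation along hres
  have key_lt : ∀ x y : LaurentSeries k,
      v (algebraMap (LaurentSeries k) L x) < v (algebraMap (LaurentSeries k) L y) ↔
        Valued.v x < Valued.v y := fun x y => hres.lt_iff_lt
  have key_eq : ∀ x y : LaurentSeries k,
      Valued.v x = Valued.v y →
        v (algebraMap (LaurentSeries k) L x) = v (algebraMap (LaurentSeries k) L y) :=
    fun x y h => hres.val_eq.mpr h
  have hvT0 : v T ≠ 0 := v.ne_zero_iff.mpr hTne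
  have hvT0' : (0 : Γ) < v T := zero_lt_iff.mpr hvT0
  have hvT1 : v T < 1 := by
    have h := key_lt t 1
    rw [map_one, v.map_one] at h
    rw [← hT] at h
    apply h.mpr
    rw [Valued.v.map_one, ht, LaurentSeries.valuation_single_zpow]
    rw [WithZero.exp_eq_coe_ofAdd, ← WithZero.coe_one, WithZero.coe_lt_coe, ← ofAdd_zero]
    exact Multiplicative.ofAdd_lt.mpr (by norm_num)
  have hvTinv : 1 < (v T)⁻¹ := (one_lt_inv₀ hvT0').mpr hvT1
  -- the valuation of ϑ
  have hϑ' : v (ϑ ^ p - ϑ) = (v T)⁻¹ := by rw [hϑ, map_inv₀]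
  have hvθ_gt : 1 < v ϑ := by
    by_contra h
    push_neg at h
    have h1 : v (ϑ ^ p - ϑ) ≤ 1 := by
      refine le_trans (v.map_sub _ _) (max_le ?_ h)
      rw [map_pow]
      exact pow_le_one₀ zero_le' h
    exact absurd (h1.trans_lt hvTinv) (lt_irrefl _ ∘ (hϑ' ▸ ·))
  have hvθp : (v ϑ) ^ p = (v T)⁻¹ := by
    have hlt : v ϑ < v (ϑ ^ p) := by
      rw [map_pow]
      calc v ϑ = (v ϑ) ^ 1 := (pow_one _).symm
      _ < (v ϑ) ^ p := pow_lt_pow_right₀ hvθ_gt hp.one_lt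
    have := v.map_sub_eq_of_lt_left hlt
    rw [hϑ', map_pow] at this
    exact this.symm
  -- basic facts about troot
  have htroot_pow : ∀ j, troot (j + 1) ^ p = troot j := by
    intro j
    have : troot (j + 1) = (frobeniusEquiv K p).symm (troot j) :=
      Function.iterate_succ_apply' _ j _
    rw [this, frobeniusEquiv_symm_pow_p]
  have htroot_zero : troot 0 = algebraMap (LaurentSeries k) K t := rfl
  have htroot_pp : ∀ j, troot j ^ p ^ j = algebraMap (LaurentSeries k) K t := by
    intro j
    induction j with
    | zero => simpa using htroot_zero
    | succ j ih =>
      rw [pow_succ', pow_mul, htroot_pow, ih]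
  -- b (i+1) ^ p = t⁻¹ + b i
  have hb_pow : ∀ i, b (i + 1) ^ p = (algebraMap (LaurentSeries k) K t)⁻¹ + b i := by
    intro i
    have h1 : b (i + 1) ^ p = ∑ j ∈ Finset.range (i + 1), ((troot (j + 1))⁻¹) ^ p := by
      show (∑ j ∈ Finset.range (i + 1), (troot (j + 1))⁻¹) ^ p = _
      rw [← frobenius_def, map_sum]
      exact Finset.sum_congr rfl fun j _ => by rw [frobenius_def]
    have h2 : ∀ j, ((troot (j + 1))⁻¹ : K) ^ p = (troot j)⁻¹ := fun j => by
      rw [inv_pow, htroot_pow]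
    rw [h1]
    simp only [h2]
    rw [Finset.sum_range_succ']
    rw [htroot_zero, add_comm]
  -- the key algebraic identity : (ϑ - b i)^(p^i) = ϑ
  have hkey : ∀ i, (ϑ - algebraMap K L (b i)) ^ p ^ i = ϑ := by
    intro i
    induction i with
    | zero =>
      have : b 0 = 0 := Finset.sum_range_zero _
      rw [this, map_zero, sub_zero, pow_zero, pow_one]
    | succ i ih =>
      have hsub : (ϑ - algebraMap K L (b (i + 1))) ^ p = ϑ - algebraMap K L (b i) := by
        rw [sub_pow_expChar, ← map_pow, hb_pow, map_add, map_inv₀,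
          ← IsScalarTower.algebraMap_apply (LaurentSeries k) K L, ← hT]
        have hϑp : ϑ ^ p = T⁻¹ + ϑ := by rw [← hϑ]; ring
        rw [hϑp]; ring
      rw [pow_succ', pow_mul, hsub, ih]
  -- first part
  have part1 : ∀ i : ℕ, (v (ϑ - algebraMap K L (b i))) ^ p ^ (i + 1) = (v T)⁻¹ := by
    intro i
    rw [pow_succ, pow_mul, ← map_pow, hkey, hvθp]
  refine ⟨part1, ?_⟩
  -- second part
  rintro ⟨c, hc⟩
  obtain ⟨n, a, ha⟩ : ∃ (n : ℕ) (a : LaurentSeries k),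
      algebraMap (LaurentSeries k) K a = c ^ p ^ n := by
    obtain ⟨n, y, hy⟩ := IsPurelyInseparable.pow_mem (LaurentSeries k) p c
    exact ⟨n, y, hy⟩
  -- v (b n - c) = v (ϑ - b n)
  set θ : L := ϑ - algebraMap K L (b n) with hθ_def
  have hvbc : v (algebraMap K L (b n - c)) = v θ := by
    have h := v.map_sub_eq_of_lt_right (hc n)
    have : (ϑ - algebraMap K L c) - θ = algebraMap K L (b n - c) := by
      rw [map_sub]; ring
    rw [this] at h
    exact h
  have hvθ0 : v θ ≠ 0 := by
    intro h0
    have := part1 n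
    rw [← hθ_def, h0, zero_pow (pow_ne_zero _ hp.ne_zero)] at this
    exact (inv_ne_zero hvT0) this.symm
  have hbcne : b n - c ≠ 0 := by
    intro h0
    rw [h0, map_zero, v.map_zero] at hvbc
    exact hvθ0 hvbc.symm
  -- b n ^ p ^ n is a Laurent series
  have hbn : algebraMap (LaurentSeries k) K
      (∑ j ∈ Finset.range n, ((t ^ p ^ (n - (j + 1)))⁻¹ : LaurentSeries k)) = b n ^ p ^ n := by
    rw [map_sum]
    show _ = (∑ j ∈ Finset.range n, (troot (j + 1))⁻¹) ^ p ^ n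
    rw [← iterateFrobenius_def (p := p) (R := K) (n := n), map_sum]
    refine Finset.sum_congr rfl fun j hj => ?_
    rw [iterateFrobenius_def, map_inv₀, inv_pow, map_pow]
    congr 1
    have hjn : j + 1 ≤ n := Finset.mem_range.mp hj
    rw [← htroot_pp (j + 1), ← pow_mul, ← pow_add]
    congr 2
    omega
  set ab : LaurentSeries k := ∑ j ∈ Finset.range n, ((t ^ p ^ (n - (j + 1)))⁻¹ : LaurentSeries k)
    with hab_def
  have hd : algebraMap (LaurentSeries k) K (ab - a) = (b n - c) ^ p ^ n := by
    rw [map_sub, hbn, ha, sub_pow_expChar_pow]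
  have habne : ab - a ≠ 0 := by
    intro h0
    have hz : ((b n - c) ^ p ^ n : K) = 0 := by rw [← hd, h0, map_zero]
    exact pow_ne_zero _ hbcne hz
  have hbcne' : (b n : K) - c ≠ 0 := hbcne
  -- the valuation of ab - a is an integer power of v T
  obtain ⟨w, hw⟩ : ∃ w : Multiplicative ℤ, Valued.v (ab - a) = (w : WithZero (Multiplicative ℤ)) := by
    have h : Valued.v (ab - a) ≠ 0 := (Valuation.ne_zero_iff _).mpr habne
    obtain ⟨w, hw⟩ := WithZero.ne_zero_iff_exists.mp h
    exact ⟨w, hw.symm⟩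
  set s : ℤ := Multiplicative.toAdd w with hs_def
  have hsingle : Valued.v (ab - a) = Valued.v (HahnSeries.single (-s) (1 : k)) := by
    rw [hw, LaurentSeries.valuation_single_zpow, neg_neg, hs_def, WithZero.exp_eq_coe_ofAdd, ofAdd_toAdd]
  have hval : v (algebraMap (LaurentSeries k) L (ab - a)) = (v T) ^ (-s) := by
    rw [key_eq _ _ hsingle]
    have h1 : (HahnSeries.single (-s) (1 : k) : LaurentSeries k) = t ^ (-s) := by
      rw [ht]; exact RatFunc.single_zpow (-s)
    rw [h1, map_zpow₀, ← hT, map_zpow₀]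
  -- compare with the valuation computed from part1
  have hval2 : v (algebraMap (LaurentSeries k) L (ab - a)) = (v θ) ^ p ^ n := by
    rw [IsScalarTower.algebraMap_apply (LaurentSeries k) K L, hd, map_pow, map_pow, hvbc]
  have hfinal : (v T) ^ ((-s) * (p : ℤ)) = (v T) ^ (-1 : ℤ) := by
    have h1 : ((v T) ^ (-s)) ^ (p : ℕ) = ((v θ) ^ p ^ n) ^ (p : ℕ) := by
      rw [← hval, ← hval2]
    rw [← pow_mul, ← pow_succ, part1 n] at h1
    rw [zpow_mul, zpow_natCast, h1, zpow_neg, zpow_one]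
  have hexp : (-s) * (p : ℤ) = -1 :=
    (zpow_right_strictAnti₀ hvT0' hvT1).injective hfinal
  have hps : (p : ℤ) * s = 1 := by linear_combination (-1 : ℤ) * hexp
  have hdvd : (p : ℤ) ∣ 1 := ⟨s, hps.symm⟩
  have hple : (p : ℤ) ≤ 1 := Int.le_of_dvd one_pos hdvd
  have : (1 : ℤ) < p := by exact_mod_cast hp.one_lt
  omega
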